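/- arXiv:2505.17851 — 3 statements merged into one kernel-verified Lean document; each statement's English description precedes it below -/
import Mathlib

section
/- Let a < b be real numbers. Let U be a random variable taking values in [a,b], and V a random variable with E[V^2] < ∞ taking values in (-∞,a] ∪ [b,∞) such that P(V < a) + P(V > b) > 0. If E[U] = E[V] and this common expectation lies in the open interval (a,b), then Var(U) < Var(V). -/
open MeasureTheory ProbabilityTheory

/-- Lemma (compare variance): if `U` takes values in `[a,b]`, `V` takes values in
`(-∞,a] ∪ [b,∞)` with positive probability of being strictly outside `[a,b]`,
`V` is square-integrable, and `E[U] = E[V] ∈ (a,b)`, then `Var(U) < Var(V)`. -/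
theorem stmt_0 {Ω : Type*} [MeasureSpace Ω] [IsProbabilityMeasure (ℙ : Measure Ω)]
    (a b : ℝ) (hab : a < b) (U V : Ω → ℝ)
    (hUmeas : Measurable U) (hVmeas : Measurable V)
    (hU : ∀ᵐ ω ∂(ℙ : Measure Ω), U ω ∈ Set.Icc a b)
    (hV : ∀ᵐ ω ∂(ℙ : Measure Ω), V ω ≤ a ∨ b ≤ V ω)
    (hV2 : MemLp V 2 (ℙ : Measure Ω))
    (hpos : 0 < ℙ {ω | V ω < a} + ℙ {ω | b < V ω})
    (hmean : ∫ ω, U ω = ∫ ω, V ω)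
    (hmem : (∫ ω, U ω) ∈ Set.Ioo a b) :
    variance U ℙ < variance V ℙ := by
  obtain ⟨hma, hmb⟩ := hmem
  set m := ∫ ω, U ω with hm
  -- U is in L²
  have hU2 : MemLp U 2 (ℙ : Measure Ω) := by
    apply MemLp.of_bound hUmeas.aestronglyMeasurable (max |a| |b|)
    filter_upwards [hU] with ω hω
    rw [Real.norm_eq_abs]
    exact abs_le.2 ⟨le_trans (neg_le_neg (le_max_left _ _))
      (le_trans (neg_abs_le a) hω.1),
      hω.2.trans ((le_abs_self b).trans (le_max_right _ _))⟩
  have hUint : Integrable U (ℙ : Measure Ω) :=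
    hU2.integrable (by norm_num)
  have hVint : Integrable V (ℙ : Measure Ω) :=
    hV2.integrable (by norm_num)
  have hUsq : Integrable (fun ω => (U ω - m) ^ 2) (ℙ : Measure Ω) :=
    (hU2.sub (memLp_const m)).integrable_sq
  have hVsq : Integrable (fun ω => (V ω - m) ^ 2) (ℙ : Measure Ω) :=
    (hV2.sub (memLp_const m)).integrable_sq
  set c : ℝ := a + b - 2 * m with hc
  set k : ℝ := m ^ 2 - a * b with hk
  have hLU : Integrable (fun ω => c * U ω + k) (ℙ : Measure Ω) :=
    (hUint.const_mul c).add (integrable_const k)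
  have hLV : Integrable (fun ω => c * V ω + k) (ℙ : Measure Ω) :=
    (hVint.const_mul c).add (integrable_const k)
  have hintLU : ∫ ω, (c * U ω + k) = c * m + k := by
    rw [integral_add (hUint.const_mul c) (integrable_const k),
      integral_const_mul, integral_const]
    simp [hm]
  have hintLV : ∫ ω, (c * V ω + k) = c * m + k := by
    rw [integral_add (hVint.const_mul c) (integrable_const k),
      integral_const_mul, integral_const]
    simp [← hmean, hm]
  -- variance formulas
  have hVarU : variance U ℙ = ∫ ω, (U ω - m) ^ 2 := by
    rw [variance_eq_integral hU2.aemeasurable]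
  have hVarV : variance V ℙ = ∫ ω, (V ω - m) ^ 2 := by
    rw [variance_eq_integral hV2.aemeasurable]
    simp only [← hmean]
  -- upper bound for Var U
  have h1 : variance U ℙ ≤ c * m + k := by
    rw [hVarU, ← hintLU]
    apply integral_mono_ae hUsq hLU
    filter_upwards [hU] with ω hω
    have h1 := hω.1; have h2 := hω.2
    show (U ω - m) ^ 2 ≤ (a + b - 2 * m) * U ω + (m ^ 2 - a * b)
    nlinarith [mul_nonneg (by linarith : (0:ℝ) ≤ U ω - a) (by linarith : (0:ℝ) ≤ b - U ω)]
  -- strict lower bound for Var V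
  have hg : Integrable (fun ω => (V ω - m) ^ 2 - (c * V ω + k)) (ℙ : Measure Ω) :=
    hVsq.sub hLV
  have hgnn : 0 ≤ᵐ[(ℙ : Measure Ω)] fun ω => (V ω - m) ^ 2 - (c * V ω + k) := by
    filter_upwards [hV] with ω hω
    have heq : (V ω - m) ^ 2 - (c * V ω + k) = (V ω - a) * (V ω - b) := by ring
    simp only [Pi.zero_apply]
    rw [heq]
    rcases hω with h | h
    · nlinarith [mul_nonneg (by linarith : (0:ℝ) ≤ a - V ω) (by linarith : (0:ℝ) ≤ b - V ω)]
    · nlinarith [mul_nonneg (by linarith : (0:ℝ) ≤ V ω - a) (by linarith : (0:ℝ) ≤ V ω - b)]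
  have hposset : 0 < (ℙ : Measure Ω) {ω | V ω < a} ∨ 0 < (ℙ : Measure Ω) {ω | b < V ω} := by
    by_contra h
    push_neg at h
    rw [le_zero_iff.1 h.1, le_zero_iff.1 h.2] at hpos
    simp at hpos
  have hsupp : 0 < (ℙ : Measure Ω)
      (Function.support fun ω => (V ω - m) ^ 2 - (c * V ω + k)) := by
    have key : ∀ ω, (V ω < a ∨ b < V ω) →
        (V ω - m) ^ 2 - (c * V ω + k) ≠ 0 := by
      intro ω hω
      have : (V ω - m) ^ 2 - (c * V ω + k) = (V ω - a) * (V ω - b) := by ring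
      rw [this]
      rcases hω with h | h
      · exact ne_of_gt (mul_pos_of_neg_of_neg (by linarith) (by linarith))
      · exact ne_of_gt (mul_pos (by linarith) (by linarith))
    rcases hposset with h | h
    · exact lt_of_lt_of_le h (measure_mono fun ω hω => key ω (Or.inl hω))
    · exact lt_of_lt_of_le h (measure_mono fun ω hω => key ω (Or.inr hω))
  have hgpos : 0 < ∫ ω, ((V ω - m) ^ 2 - (c * V ω + k)) :=
    (integral_pos_iff_support_of_nonneg_ae hgnn hg).2 hsupp
  have h2 : c * m + k < variance V ℙ := by
    rw [hVarV]
    have := integral_sub hVsq hLV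
    rw [this] at hgpos
    rw [hintLV] at hgpos
    linarith
  linarith
end

section
/- Under the total-variation continuity assumption on θ ↦ μ_θ over a compact parameter set Θ, the set P of all power functions is an equicontinuous, uniformly bounded subset of C(Θ); moreover P is closed under uniform limits, hence P is compact in C(Θ) with the supremum norm. -/
open MeasureTheory Filter

lemma lemA {Y : Type*} [MeasurableSpace Y] (ν : Measure Y) [IsFiniteMeasure ν]
    {ι : Type*} (U : Ultrafilter ι) (d : ι → Y → ℝ)
    (hd_meas : ∀ i, Measurable (d i)) (hd_mem : ∀ i y, d i y ∈ Set.Icc (0:ℝ) 1) :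
    ∃ δ : Y → ℝ, Measurable δ ∧ (∀ y, δ y ∈ Set.Icc (0:ℝ) 1) ∧
      ∀ g : Y → ℝ, (∀ y, 0 ≤ g y) → Integrable g ν →
        Tendsto (fun i => ∫ y, d i y * g y ∂ν) (U : Filter ι)
          (nhds (∫ y, δ y * g y ∂ν)) := by
  classical
  -- membership in L²
  have hbd : ∀ (a : Y → ℝ), (∀ y, a y ∈ Set.Icc (0:ℝ) 1) → ∀ y, ‖a y‖ ≤ 1 := by
    intro a ha y
    rw [Real.norm_eq_abs, abs_of_nonneg (ha y).1]
    exact (ha y).2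
  have memd : ∀ i, MemLp (d i) 2 ν := fun i =>
    MemLp.of_bound (hd_meas i).aestronglyMeasurable 1 (Filter.Eventually.of_forall (hbd _ (hd_mem i)))
  let e : ι → Lp ℝ 2 ν := fun i => (memd i).toLp (d i)
  -- inner products as integrals
  have hinner : ∀ (a b : Y → ℝ) (ha : MemLp a 2 ν) (hb : MemLp b 2 ν),
      (inner ℝ (ha.toLp a) (hb.toLp b) : ℝ) = ∫ y, a y * b y ∂ν := by
    intro a b ha hb
    rw [L2.inner_def]
    refine integral_congr_ae ?_
    filter_upwards [ha.coeFn_toLp, hb.coeFn_toLp] with y h1 h2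
    rw [h1, h2]
    simp [RCLike.inner_apply, mul_comm]
  -- the weak-* limit point
  set R : ℝ := (measureUnivNNReal ν : ℝ) ^ (2:ENNReal).toReal⁻¹ * 1 with hR
  let ΛW : ι → WeakDual ℝ (Lp ℝ 2 ν) := fun i =>
    StrongDual.toWeakDual (InnerProductSpace.toDual ℝ (Lp ℝ 2 ν) (e i))
  have hmemB : ∀ i, ΛW i ∈ (WeakDual.toStrongDual ⁻¹' Metric.closedBall 0 R : Set (WeakDual ℝ (Lp ℝ 2 ν))) := by
    intro i
    simp only [Set.mem_preimage, Metric.mem_closedBall, dist_zero_right]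
    have h1 : ‖WeakDual.toStrongDual (ΛW i)‖ = ‖e i‖ := by
      simp [ΛW, StrongDual.coe_toWeakDual]
    rw [h1]
    refine Lp.norm_le_of_ae_bound zero_le_one ?_
    filter_upwards [(memd i).coeFn_toLp] with y hy
    rw [hy]
    exact hbd _ (hd_mem i) y
  obtain ⟨Λ, -, hΛle⟩ := (WeakDual.isCompact_closedBall (0 : StrongDual ℝ (Lp ℝ 2 ν)) R).ultrafilter_le_nhds
      (U.map ΛW) (by
        rw [Ultrafilter.coe_map, Filter.le_principal_iff, Filter.mem_map]
        exact Filter.univ_mem' hmemB)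
  have hconv : Tendsto ΛW (U : Filter ι) (nhds Λ) := by
    rwa [Ultrafilter.coe_map] at hΛle
  set δL : Lp ℝ 2 ν := (InnerProductSpace.toDual ℝ (Lp ℝ 2 ν)).symm (WeakDual.toStrongDual Λ) with hδL
  have heval : ∀ g : Lp ℝ 2 ν, Tendsto (fun i => (inner ℝ (e i) g : ℝ)) (U : Filter ι)
      (nhds (inner ℝ δL g)) := by
    intro g
    have h1 : Tendsto (fun i => ΛW i g) (U : Filter ι) (nhds (Λ g)) :=
      ((WeakDual.eval_continuous g).continuousAt.tendsto).comp hconv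
    have h2 : ∀ i, ΛW i g = inner ℝ (e i) g := by
      intro i
      simp only [ΛW, StrongDual.coe_toWeakDual]
      exact InnerProductSpace.toDual_apply_apply
    have h3 : (Λ g : ℝ) = inner ℝ δL g := by
      rw [hδL, InnerProductSpace.toDual_symm_apply]
      rfl
    rw [← h3]
    simpa only [h2] using h1
  -- set-integral bounds for δL
  have hsetint : ∀ (A : Set Y), MeasurableSet A →
      (0 ≤ ∫ y in A, δL y ∂ν) ∧ (∫ y in A, δL y ∂ν ≤ (ν A).toReal) := by
    intro A hA
    set indA : Lp ℝ 2 ν := indicatorConstLp 2 hA (measure_ne_top ν A) (1:ℝ) with hIA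
    have h1 : (inner ℝ indA δL : ℝ) = ∫ y in A, δL y ∂ν := L2.inner_indicatorConstLp_one hA _ δL
    have h2 : ∀ i, (inner ℝ indA (e i) : ℝ) = ∫ y in A, d i y ∂ν := by
      intro i
      rw [L2.inner_indicatorConstLp_one hA _ (e i)]
      refine setIntegral_congr_ae hA ?_
      filter_upwards [(memd i).coeFn_toLp] with y hy _
      exact hy
    have h3 : Tendsto (fun i => (inner ℝ indA (e i) : ℝ)) (U : Filter ι) (nhds (inner ℝ indA δL)) := by
      have := heval indA
      simpa only [real_inner_comm] using this
    constructor
    · rw [← h1]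
      refine ge_of_tendsto h3 (Filter.Eventually.of_forall fun i => ?_)
      rw [h2 i]
      exact setIntegral_nonneg hA fun y _ => (hd_mem i y).1
    · rw [← h1]
      refine le_of_tendsto h3 (Filter.Eventually.of_forall fun i => ?_)
      rw [h2 i]
      have : ∫ y in A, d i y ∂ν ≤ ∫ _ in A, (1:ℝ) ∂ν := by
        refine setIntegral_mono_on ((memd i).integrable one_le_two).integrableOn
          (integrableOn_const (measure_ne_top ν A)) hA fun y _ => (hd_mem i y).2
      simpa [setIntegral_const, Measure.real] using this
  have hδL_int : Integrable (δL : Y → ℝ) ν := (Lp.memLp δL).integrable one_le_two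
  have h0 : 0 ≤ᵐ[ν] (δL : Y → ℝ) := by
    refine ae_nonneg_of_forall_setIntegral_nonneg hδL_int fun s hs _ => (hsetint s hs).1
  have h1 : ∀ᵐ y ∂ν, (δL : Y → ℝ) y ≤ 1 := by
    have : 0 ≤ᵐ[ν] (fun y => 1 - (δL : Y → ℝ) y) := by
      refine ae_nonneg_of_forall_setIntegral_nonneg ((integrable_const (1:ℝ)).sub hδL_int)
        fun s hs _ => ?_
      rw [integral_sub (integrableOn_const (C := (1:ℝ)) (measure_ne_top ν s)) hδL_int.integrableOn]
      simp only [setIntegral_const, smul_eq_mul, mul_one, sub_nonneg]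
      exact (hsetint s hs).2
    filter_upwards [this] with y hy
    simp only [Pi.zero_apply] at hy
    linarith
  -- measurable representative
  set sm : Y → ℝ := (Lp.aestronglyMeasurable δL).mk (δL : Y → ℝ) with hsm
  have hsm_meas : Measurable sm := (Lp.aestronglyMeasurable δL).stronglyMeasurable_mk.measurable
  have hsm_ae : (δL : Y → ℝ) =ᵐ[ν] sm := (Lp.aestronglyMeasurable δL).ae_eq_mk
  set δ : Y → ℝ := fun y => max 0 (min 1 (sm y)) with hδdef
  have hδ_meas : Measurable δ := measurable_const.max (measurable_const.min hsm_meas)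
  have hδ_mem : ∀ y, δ y ∈ Set.Icc (0:ℝ) 1 :=
    fun y => ⟨le_max_left _ _, max_le zero_le_one (min_le_left _ _)⟩
  have hδ_ae : δ =ᵐ[ν] (δL : Y → ℝ) := by
    filter_upwards [h0, h1, hsm_ae] with y hy0 hy1 hye
    simp only [Pi.zero_apply] at hy0
    show max 0 (min 1 (sm y)) = (δL : Y → ℝ) y
    rw [← hye, min_eq_right hy1, max_eq_right hy0]
  refine ⟨δ, hδ_meas, hδ_mem, ?_⟩
  -- main convergence statement
  intro g hg0 hgInt
  have memδ : MemLp δ 2 ν :=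
    MemLp.of_bound hδ_meas.aestronglyMeasurable 1 (Filter.Eventually.of_forall (hbd _ hδ_mem))
  -- truncations
  set gM : ℕ → Y → ℝ := fun M y => min (g y) M with hgM
  have hgM_mem : ∀ M : ℕ, MemLp (gM M) 2 ν := by
    intro M
    refine MemLp.of_bound (hgInt.aestronglyMeasurable.inf aestronglyMeasurable_const) M
      (Filter.Eventually.of_forall fun y => ?_)
    rw [Real.norm_eq_abs, abs_of_nonneg (le_min (hg0 y) (Nat.cast_nonneg M))]
    exact min_le_right _ _
  have hgM_int : ∀ M : ℕ, Integrable (gM M) ν := fun M => (hgM_mem M).integrable one_le_two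
  set eps : ℕ → ℝ := fun M => ∫ y, (g y - gM M y) ∂ν with heps
  have heps_nonneg : ∀ M, 0 ≤ eps M :=
    fun M => integral_nonneg fun y => sub_nonneg.2 (min_le_left _ _)
  have heps0 : Tendsto eps atTop (nhds 0) := by
    have := tendsto_integral_of_dominated_convergence (F := fun M y => g y - gM M y)
      (f := fun _ => (0:ℝ)) (bound := g)
      (fun M => (hgInt.sub (hgM_int M)).aestronglyMeasurable)
      hgInt
      (fun M => Filter.Eventually.of_forall fun y => by
        rw [Real.norm_eq_abs, abs_of_nonneg (sub_nonneg.2 (min_le_left _ _))]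
        exact sub_le_self _ (le_min (hg0 y) (Nat.cast_nonneg M)))
      (Filter.Eventually.of_forall fun y => by
        refine tendsto_atTop_of_eventually_const (i₀ := Nat.ceil (g y)) fun M hM => ?_
        have hle : g y ≤ (M:ℝ) := Nat.ceil_le.1 hM
        show g y - min (g y) (M:ℝ) = 0
        rw [min_eq_left hle, sub_self])
    simpa using this
  -- error bound for any [0,1]-valued measurable multiplier
  have hkey : ∀ (a : Y → ℝ), Measurable a → (∀ y, a y ∈ Set.Icc (0:ℝ) 1) → ∀ M : ℕ,
      |(∫ y, a y * g y ∂ν) - ∫ y, a y * gM M y ∂ν| ≤ eps M := by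
    intro a hameas hamem M
    have hag : Integrable (fun y => a y * g y) ν :=
      hgInt.bdd_mul hameas.aestronglyMeasurable (Filter.Eventually.of_forall (hbd _ hamem))
    have hagM : Integrable (fun y => a y * gM M y) ν :=
      (hgM_int M).bdd_mul hameas.aestronglyMeasurable (Filter.Eventually.of_forall (hbd _ hamem))
    rw [← integral_sub hag hagM]
    calc |∫ y, (a y * g y - a y * gM M y) ∂ν|
        ≤ ∫ y, |a y * g y - a y * gM M y| ∂ν := by
          simpa [Real.norm_eq_abs] using
            norm_integral_le_integral_norm (fun y => a y * g y - a y * gM M y) (μ := ν)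
      _ ≤ ∫ y, (g y - gM M y) ∂ν := by
          refine integral_mono (hag.sub hagM).abs (hgInt.sub (hgM_int M)) fun y => ?_
          rw [← mul_sub, abs_mul, abs_of_nonneg (sub_nonneg.2 (min_le_left _ _)),
            abs_of_nonneg (hamem y).1]
          exact mul_le_of_le_one_left (sub_nonneg.2 (min_le_left _ _)) (hamem y).2
  -- inner products with truncations converge
  have hlim : ∀ M : ℕ, Tendsto (fun i => ∫ y, d i y * gM M y ∂ν) (U : Filter ι)
      (nhds (∫ y, δ y * gM M y ∂ν)) := by
    intro M
    have h1 := heval ((hgM_mem M).toLp (gM M))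
    have h2 : ∀ i, (inner ℝ (e i) ((hgM_mem M).toLp (gM M)) : ℝ) = ∫ y, d i y * gM M y ∂ν :=
      fun i => hinner _ _ _ _
    have h3 : (inner ℝ δL ((hgM_mem M).toLp (gM M)) : ℝ) = ∫ y, δ y * gM M y ∂ν := by
      have h4 : (inner ℝ (memδ.toLp δ) ((hgM_mem M).toLp (gM M)) : ℝ) = ∫ y, δ y * gM M y ∂ν :=
        hinner _ _ _ _
      rw [← h4]
      congr 1
      rw [show δL = (Lp.memLp δL).toLp (δL : Y → ℝ) from (Lp.toLp_coeFn δL (Lp.memLp δL)).symm]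
      exact MemLp.toLp_congr _ _ hδ_ae.symm
    rw [← h3]
    simpa only [h2] using h1
  -- final epsilon/3 argument
  rw [Metric.tendsto_nhds]
  intro ε hε
  obtain ⟨M, hM⟩ : ∃ M : ℕ, eps M < ε / 3 := by
    have := (heps0.eventually (gt_mem_nhds (show (0:ℝ) < ε / 3 by linarith))).exists
    exact this
  have hev := (hlim M).eventually (Metric.ball_mem_nhds _ (show (0:ℝ) < ε / 3 by linarith))
  filter_upwards [hev] with i hi
  rw [Real.dist_eq]
  have e1 : |(∫ y, d i y * g y ∂ν) - ∫ y, d i y * gM M y ∂ν| ≤ eps M :=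
    hkey (d i) (hd_meas i) (hd_mem i) M
  have e3 : |(∫ y, δ y * g y ∂ν) - ∫ y, δ y * gM M y ∂ν| ≤ eps M :=
    hkey δ hδ_meas hδ_mem M
  have e2 : |(∫ y, d i y * gM M y ∂ν) - ∫ y, δ y * gM M y ∂ν| < ε / 3 := by
    simpa [Real.dist_eq] using hi
  calc |(∫ y, d i y * g y ∂ν) - ∫ y, δ y * g y ∂ν|
      ≤ |(∫ y, d i y * g y ∂ν) - ∫ y, d i y * gM M y ∂ν|
        + |(∫ y, d i y * gM M y ∂ν) - ∫ y, δ y * gM M y ∂ν|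
        + |(∫ y, δ y * gM M y ∂ν) - ∫ y, δ y * g y ∂ν| := by
        have := abs_sub_le (∫ y, d i y * g y ∂ν) (∫ y, d i y * gM M y ∂ν) (∫ y, δ y * g y ∂ν)
        have h2 := abs_sub_le (∫ y, d i y * gM M y ∂ν) (∫ y, δ y * gM M y ∂ν) (∫ y, δ y * g y ∂ν)
        linarith
    _ < ε := by
        rw [abs_sub_comm (∫ y, δ y * gM M y ∂ν)] at *
        linarith

/-- Under total-variation continuity of `θ ↦ μ_θ` over a compact `Θ`, the set of all
power functions, viewed inside `C(Θ, ℝ)`, is compact. -/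
theorem stmt_5 {Θ : Type*} [MetricSpace Θ] [CompactSpace Θ]
    {Y : Type*} [MeasurableSpace Y] (μ : Measure Y) [SigmaFinite μ]
    (f : Θ → Y → ℝ)
    (hf_nonneg : ∀ θ y, 0 ≤ f θ y)
    (hf_int : ∀ θ, Integrable (f θ) μ)
    (hTV : ∀ (θn : ℕ → Θ) (θ : Θ), Tendsto θn atTop (nhds θ) →
      Tendsto (fun n => ∫ y, |f (θn n) y - f θ y| ∂μ) atTop (nhds 0)) :
    IsCompact {p : C(Θ, ℝ) | ∃ δ : Y → ℝ, Measurable δ ∧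
      (∀ y, δ y ∈ Set.Icc (0:ℝ) 1) ∧ ∀ θ, p θ = ∫ y, δ y * f θ y ∂μ} := by
  classical
  set S := {p : C(Θ, ℝ) | ∃ δ : Y → ℝ, Measurable δ ∧
      (∀ y, δ y ∈ Set.Icc (0:ℝ) 1) ∧ ∀ θ, p θ = ∫ y, δ y * f θ y ∂μ} with hSdef
  have hmemS : ∀ i : S, ∃ δ : Y → ℝ, Measurable δ ∧
      (∀ y, δ y ∈ Set.Icc (0:ℝ) 1) ∧ ∀ θ, (i : C(Θ, ℝ)) θ = ∫ y, δ y * f θ y ∂μ :=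
    fun i => i.2
  -- total variation modulus of continuity
  have hD : ∀ θ0 : Θ, Tendsto (fun θ => ∫ y, |f θ y - f θ0 y| ∂μ) (nhds θ0) (nhds 0) := by
    intro θ0
    rw [tendsto_iff_seq_tendsto]
    intro x hx
    exact hTV x θ0 hx
  have hbd1 : ∀ (a : Y → ℝ), (∀ y, a y ∈ Set.Icc (0:ℝ) 1) → ∀ y, ‖a y‖ ≤ 1 := by
    intro a ha y
    rw [Real.norm_eq_abs, abs_of_nonneg (ha y).1]
    exact (ha y).2
  have hint_mul : ∀ (a : Y → ℝ), Measurable a → (∀ y, a y ∈ Set.Icc (0:ℝ) 1) → ∀ θ : Θ,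
      Integrable (fun y => a y * f θ y) μ := fun a ham hamem θ =>
    (hf_int θ).bdd_mul ham.aestronglyMeasurable (Filter.Eventually.of_forall (hbd1 a hamem))
  have key_bound : ∀ (a : Y → ℝ), Measurable a → (∀ y, a y ∈ Set.Icc (0:ℝ) 1) → ∀ θ θ' : Θ,
      |(∫ y, a y * f θ y ∂μ) - ∫ y, a y * f θ' y ∂μ| ≤ ∫ y, |f θ y - f θ' y| ∂μ := by
    intro a ham hamem θ θ'
    have h1 := hint_mul a ham hamem θ
    have h2 := hint_mul a ham hamem θ'
    rw [← integral_sub h1 h2]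
    calc |∫ y, (a y * f θ y - a y * f θ' y) ∂μ|
        ≤ ∫ y, |a y * f θ y - a y * f θ' y| ∂μ := by
          simpa [Real.norm_eq_abs] using
            norm_integral_le_integral_norm (fun y => a y * f θ y - a y * f θ' y) (μ := μ)
      _ ≤ ∫ y, |f θ y - f θ' y| ∂μ := by
          refine integral_mono (h1.sub h2).abs ((hf_int θ).sub (hf_int θ')).abs fun y => ?_
          rw [← mul_sub, abs_mul, abs_of_nonneg (hamem y).1]
          exact mul_le_of_le_one_left (abs_nonneg _) (hamem y).2
  -- equicontinuity
  have hequi : Equicontinuous (fun i : S => ⇑(i : C(Θ, ℝ))) := by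
    intro θ0
    rw [Metric.equicontinuousAt_iff_right]
    intro ε hε
    filter_upwards [(hD θ0).eventually (gt_mem_nhds hε)] with θ hθ i
    obtain ⟨δ, hδm, hδmem, hδeq⟩ := hmemS i
    rw [Real.dist_eq, hδeq θ0, hδeq θ]
    calc |(∫ y, δ y * f θ0 y ∂μ) - ∫ y, δ y * f θ y ∂μ|
        ≤ ∫ y, |f θ0 y - f θ y| ∂μ := key_bound δ hδm hδmem θ0 θ
      _ = ∫ y, |f θ y - f θ0 y| ∂μ :=
          integral_congr_ae (Filter.Eventually.of_forall fun y => abs_sub_comm _ _)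
      _ < ε := hθ
  refine ArzelaAscoli.isCompact_of_equicontinuous S ?_ hequi
  -- pointwise compactness
  refine IsCompact.of_isClosed_subset
    (isCompact_univ_pi fun θ => isCompact_Icc (a := (0:ℝ)) (b := ∫ y, f θ y ∂μ)) ?_ ?_
  swap
  · rintro q ⟨p, hp, rfl⟩
    rw [Set.mem_univ_pi]
    intro θ
    obtain ⟨δ, hδm, hδmem, hδeq⟩ := hp
    have hδeq' : p θ = ∫ y, δ y * f θ y ∂μ := hδeq θ
    show p θ ∈ Set.Icc (0:ℝ) (∫ y, f θ y ∂μ)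
    constructor
    · rw [hδeq']
      exact integral_nonneg fun y => mul_nonneg (hδmem y).1 (hf_nonneg θ y)
    · rw [hδeq']
      refine integral_mono (hint_mul δ hδm hδmem θ) (hf_int θ) fun y => ?_
      exact mul_le_of_le_one_left (hf_nonneg θ y) (hδmem y).2
  -- closedness in the product topology
  refine isClosed_of_closure_subset ?_
  intro q hq
  -- a finite measure equivalent to μ
  obtain ⟨w, hw_pos, hw_meas, hw_int⟩ :=
    exists_pos_lintegral_lt_of_sigmaFinite μ (ε := 1) one_ne_zero
  set ν := μ.withDensity (fun y => (w y : ENNReal)) with hν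
  haveI : IsFiniteMeasure ν := isFiniteMeasure_withDensity (hw_int.trans ENNReal.one_lt_top).ne
  set G : Θ → Y → ℝ := fun θ y => ((w y : ℝ))⁻¹ * f θ y with hG
  have hwR_pos : ∀ y, (0:ℝ) < (w y : ℝ) := fun y => by exact_mod_cast hw_pos y
  have hG_nonneg : ∀ θ y, 0 ≤ G θ y := fun θ y =>
    mul_nonneg (inv_nonneg.2 (hwR_pos y).le) (hf_nonneg θ y)
  have hsmul : ∀ (a : Y → ℝ) (θ : Θ) (y : Y), w y • (a y * G θ y) = a y * f θ y := by
    intro a θ y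
    have hne : ((w y : ℝ)) ≠ 0 := (hwR_pos y).ne'
    have hcalc : (w y : ℝ) * (a y * (((w y : ℝ))⁻¹ * f θ y))
        = ((w y : ℝ) * ((w y : ℝ))⁻¹) * (a y * f θ y) := by ring
    rw [NNReal.smul_def, smul_eq_mul]
    show (w y : ℝ) * (a y * (((w y : ℝ))⁻¹ * f θ y)) = a y * f θ y
    rw [hcalc, mul_inv_cancel₀ hne, one_mul]
  have hG_int : ∀ θ, Integrable (G θ) ν := by
    intro θ
    rw [hν, integrable_withDensity_iff_integrable_smul hw_meas]
    have : (fun y => w y • G θ y) = f θ := by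
      funext y
      have := hsmul (fun _ => (1:ℝ)) θ y
      simpa using this
    rw [this]
    exact hf_int θ
  have hconv : ∀ (a : Y → ℝ), Measurable a → (∀ y, a y ∈ Set.Icc (0:ℝ) 1) → ∀ θ : Θ,
      (∫ y, a y * G θ y ∂ν) = ∫ y, a y * f θ y ∂μ := by
    intro a ham hamem θ
    rw [hν, integral_withDensity_eq_integral_smul hw_meas]
    exact integral_congr_ae (Filter.Eventually.of_forall fun y => hsmul a θ y)
  -- the ultrafilter
  set F : Filter (Θ → ℝ) := nhds q ⊓ Filter.principal (ContinuousMap.toFun '' S) with hF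
  haveI hFne : F.NeBot := mem_closure_iff_clusterPt.1 hq
  set m : S → (Θ → ℝ) := fun i => ⇑(i : C(Θ, ℝ)) with hm
  haveI hcomap : (Filter.comap m F).NeBot := by
    rw [Filter.comap_neBot_iff]
    intro t ht
    have h1 : (t ∩ ContinuousMap.toFun '' S).Nonempty :=
      Filter.nonempty_of_mem
        (Filter.inter_mem ht (Filter.mem_inf_of_right (Filter.mem_principal_self _)))
    obtain ⟨x, hxt, p, hp, hpx⟩ := h1
    exact ⟨⟨p, hp⟩, by rwa [show m ⟨p, hp⟩ = x from hpx]⟩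
  set U : Ultrafilter S := Ultrafilter.of (Filter.comap m F) with hU
  have hUle : (U : Filter S) ≤ Filter.comap m F := Ultrafilter.of_le _
  have hmap : Tendsto m (U : Filter S) (nhds q) :=
    le_trans (le_trans (Filter.map_mono hUle) Filter.map_comap_le) inf_le_left
  have hptw : ∀ θ, Tendsto (fun i : S => m i θ) (U : Filter S) (nhds (q θ)) :=
    fun θ => (tendsto_pi_nhds.1 hmap) θ
  -- choose the test rules
  set d : S → Y → ℝ := fun i => Classical.choose (hmemS i) with hd
  have hd_spec : ∀ i : S, Measurable (d i) ∧ (∀ y, d i y ∈ Set.Icc (0:ℝ) 1) ∧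
      ∀ θ, (i : C(Θ, ℝ)) θ = ∫ y, d i y * f θ y ∂μ := fun i => Classical.choose_spec (hmemS i)
  obtain ⟨δ, hδ_meas, hδ_mem, hδ_tend⟩ :=
    lemA ν U d (fun i => (hd_spec i).1) (fun i y => (hd_spec i).2.1 y)
  have hqeq : ∀ θ, q θ = ∫ y, δ y * f θ y ∂μ := by
    intro θ
    have h1 := hδ_tend (G θ) (hG_nonneg θ) (hG_int θ)
    have h2 : ∀ i : S, ∫ y, d i y * G θ y ∂ν = m i θ := by
      intro i
      rw [hconv (d i) (hd_spec i).1 (hd_spec i).2.1 θ]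
      exact ((hd_spec i).2.2 θ).symm
    have h1' : Tendsto (fun i : S => m i θ) (U : Filter S)
        (nhds (∫ y, δ y * G θ y ∂ν)) := by
      simpa only [h2] using h1
    have h3 := tendsto_nhds_unique h1' (hptw θ)
    rw [← h3, hconv δ hδ_meas hδ_mem θ]
  have hq_cont : Continuous q := by
    rw [continuous_iff_continuousAt]
    intro θ0
    rw [ContinuousAt]
    refine tendsto_iff_dist_tendsto_zero.2 (squeeze_zero (fun _ => dist_nonneg) ?_ (hD θ0))
    intro θ
    rw [Real.dist_eq, hqeq θ, hqeq θ0]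
    exact key_bound δ hδ_meas hδ_mem θ θ0
  exact ⟨ContinuousMap.mk q hq_cont, ⟨δ, hδ_meas, hδ_mem, fun θ => hqeq θ⟩, rfl⟩
end

section
/- Let U and V be bounded random variables, U supported on [−K,a) ∪ (b,K] and V supported on [a,b], where −K ≤ a < b ≤ K. Define ψ(x) = log E[e^{xU}] − log E[e^{xV}]. Then ψ' has at most one real root; in particular ψ is either monotone on ℝ or has exactly one critical point, at which ψ attains a strict local minimum. -/
open MeasureTheory ProbabilityTheory Filter Set

/-- If `g` is continuous and has a strictly positive derivative at each of its zeros,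
then it has at most one zero. -/
lemma subsingleton_zeros_aux {g : ℝ → ℝ} (hc : Continuous g)
    (h : ∀ x, g x = 0 → ∃ d, 0 < d ∧ HasDerivAt g d x) :
    {x : ℝ | g x = 0}.Subsingleton := by
  -- first: at a zero, g is eventually positive to the right
  have right : ∀ x : ℝ, g x = 0 → ∀ᶠ t in nhdsWithin x (Set.Ioi x), 0 < g t := by
    intro x hx
    obtain ⟨d, hd, hD⟩ := h x hx
    have hs : Tendsto (slope g x) (nhdsWithin x {x}ᶜ) (nhds d) :=
      hasDerivAt_iff_tendsto_slope.1 hD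
    have hs' : Tendsto (slope g x) (nhdsWithin x (Set.Ioi x)) (nhds d) :=
      hs.mono_left (nhdsWithin_mono _ (fun t ht => ne_of_gt ht))
    have h1 : ∀ᶠ t in nhdsWithin x (Set.Ioi x), 0 < slope g x t :=
      hs'.eventually (eventually_gt_nhds hd)
    filter_upwards [h1, self_mem_nhdsWithin] with t ht htmem
    have hpos : (0:ℝ) < t - x := sub_pos.2 htmem
    have hne0 : t - x ≠ 0 := ne_of_gt hpos
    have hgt : g t - g x = slope g x t * (t - x) := by
      rw [slope_def_field]; field_simp
    nlinarith [mul_pos ht hpos]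
  -- second: at a zero, g is eventually negative to the left
  have left : ∀ x : ℝ, g x = 0 → ∀ᶠ t in nhdsWithin x (Set.Iio x), g t < 0 := by
    intro x hx
    obtain ⟨d, hd, hD⟩ := h x hx
    have hs : Tendsto (slope g x) (nhdsWithin x {x}ᶜ) (nhds d) :=
      hasDerivAt_iff_tendsto_slope.1 hD
    have hs' : Tendsto (slope g x) (nhdsWithin x (Set.Iio x)) (nhds d) :=
      hs.mono_left (nhdsWithin_mono _ (fun t ht => ne_of_lt ht))
    have h1 : ∀ᶠ t in nhdsWithin x (Set.Iio x), 0 < slope g x t :=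
      hs'.eventually (eventually_gt_nhds hd)
    filter_upwards [h1, self_mem_nhdsWithin] with t ht htmem
    have hneg : t - x < 0 := sub_neg.2 htmem
    have hne0 : t - x ≠ 0 := ne_of_lt hneg
    have hgt : g t - g x = slope g x t * (t - x) := by
      rw [slope_def_field]; field_simp
    nlinarith [mul_neg_of_pos_of_neg ht hneg]
  have key : ∀ x₁ x₂ : ℝ, g x₁ = 0 → g x₂ = 0 → x₁ < x₂ → False := by
    intro x₁ x₂ hx₁ hx₂ hlt
    -- pick t₁ ∈ (x₁, x₂) with g t₁ > 0
    have h2 : ∀ᶠ t in nhdsWithin x₁ (Set.Ioi x₁), t < x₂ :=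
      eventually_nhdsWithin_of_eventually_nhds (eventually_lt_nhds hlt)
    obtain ⟨t₁, ⟨hgt₁, ht₁x₂⟩, hx₁t₁⟩ :=
      (((right x₁ hx₁).and h2).and self_mem_nhdsWithin).exists
    have ht₁ : x₁ < t₁ := hx₁t₁
    -- z = inf of zeros in [t₁, x₂]
    set S : Set ℝ := {t | g t = 0} ∩ Set.Icc t₁ x₂ with hS
    have hSclosed : IsClosed S := (isClosed_eq hc continuous_const).inter isClosed_Icc
    have hSne : S.Nonempty := ⟨x₂, hx₂, ht₁x₂.le, le_refl _⟩
    have hSbdd : BddBelow S := ⟨t₁, fun y hy => hy.2.1⟩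
    set z := sInf S with hz
    have hzS : z ∈ S := hSclosed.csInf_mem hSne hSbdd
    have hgz : g z = 0 := hzS.1
    have ht₁z : t₁ < z := lt_of_le_of_ne hzS.2.1 (by intro heq; rw [heq] at hgt₁; exact hgt₁.ne' hgz)
    -- g > 0 on [t₁, z)
    have hpos_on : ∀ t ∈ Set.Ico t₁ z, 0 < g t := by
      intro t ht
      obtain ⟨htt₁, htz⟩ := ht
      by_contra hle
      push_neg at hle
      rcases eq_or_lt_of_le hle with heq | hneg
      · have htS : t ∈ S := ⟨heq, htt₁, htz.le.trans hzS.2.2⟩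
        exact absurd (csInf_le hSbdd htS) (not_le.2 htz)
      · obtain ⟨c, hc1, hc2⟩ := intermediate_value_Icc' htt₁ hc.continuousOn
          (show (0:ℝ) ∈ Set.Icc (g t) (g t₁) from ⟨hneg.le, hgt₁.le⟩)
        have hcS : c ∈ S := ⟨hc2, hc1.1, (hc1.2.trans htz.le).trans hzS.2.2⟩
        have h4 : z ≤ t := (csInf_le hSbdd hcS).trans hc1.2
        exact absurd htz (not_lt.2 h4)
    -- but g < 0 just left of z, contradiction
    have h3 : ∀ᶠ t in nhdsWithin z (Set.Iio z), t₁ < t :=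
      eventually_nhdsWithin_of_eventually_nhds (eventually_gt_nhds ht₁z)
    obtain ⟨t, ⟨htneg, htt₁⟩, htz⟩ := (((left z hgz).and h3).and self_mem_nhdsWithin).exists
    exact absurd (hpos_on t ⟨htt₁.le, htz⟩) (not_lt.2 htneg.le)
  intro x₁ hx₁ x₂ hx₂
  simp only [Set.mem_setOf_eq] at hx₁ hx₂
  by_contra hne
  rcases lt_trichotomy x₁ x₂ with hlt | heq | hlt
  · exact key x₁ x₂ hx₁ hx₂ hlt
  · exact hne heq
  · exact key x₂ x₁ hx₂ hx₁ hlt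

section moments
variable {Ω : Type*} [MeasureSpace Ω] [IsProbabilityMeasure (ℙ : Measure Ω)]

lemma integrable_pow_mul_exp {K : ℝ} (hK : 0 ≤ K) {W : Ω → ℝ} (hm : Measurable W)
    (hb : ∀ᵐ ω ∂(ℙ : Measure Ω), |W ω| ≤ K) (n : ℕ) (t : ℝ) :
    Integrable (fun ω => (W ω)^n * Real.exp (t * W ω)) (ℙ : Measure Ω) := by
  refine Integrable.mono' (integrable_const (K^n * Real.exp (|t| * K)))
    (((hm.pow_const n).mul ((hm.const_mul t).exp)).aestronglyMeasurable) ?_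
  filter_upwards [hb] with ω hω
  rw [Real.norm_eq_abs, abs_mul, abs_pow, Real.abs_exp]
  refine mul_le_mul (pow_le_pow_left₀ (abs_nonneg _) hω n) (Real.exp_le_exp.2 ?_)
    (Real.exp_pos _).le (pow_nonneg hK n)
  calc t * W ω ≤ |t * W ω| := le_abs_self _
    _ = |t| * |W ω| := abs_mul _ _
    _ ≤ |t| * K := mul_le_mul_of_nonneg_left hω (abs_nonneg t)

lemma hasDerivAt_momint {K : ℝ} (hK : 0 ≤ K) {W : Ω → ℝ} (hm : Measurable W)
    (hb : ∀ᵐ ω ∂(ℙ : Measure Ω), |W ω| ≤ K) (n : ℕ) (x₀ : ℝ) :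
    HasDerivAt (fun t => ∫ ω, (W ω)^n * Real.exp (t * W ω))
      (∫ ω, (W ω)^(n+1) * Real.exp (x₀ * W ω)) x₀ := by
  have h := hasDerivAt_integral_of_dominated_loc_of_deriv_le (μ := (ℙ : Measure Ω))
    (F := fun x ω => (W ω)^n * Real.exp (x * W ω))
    (F' := fun x ω => (W ω)^(n+1) * Real.exp (x * W ω))
    (bound := fun _ => K^(n+1) * Real.exp ((|x₀|+1) * K))
    (x₀ := x₀) (Metric.ball_mem_nhds x₀ one_pos)
    (Eventually.of_forall fun x =>
      (((hm.pow_const n).mul ((hm.const_mul x).exp)).aestronglyMeasurable))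
    (integrable_pow_mul_exp hK hm hb n x₀)
    (((hm.pow_const (n+1)).mul ((hm.const_mul x₀).exp)).aestronglyMeasurable)
    ?_ (integrable_const _) ?_
  · exact h.2
  · filter_upwards [hb] with ω hω
    intro x hx
    rw [Real.norm_eq_abs, abs_mul, abs_pow, Real.abs_exp]
    refine mul_le_mul (pow_le_pow_left₀ (abs_nonneg _) hω (n+1)) (Real.exp_le_exp.2 ?_)
      (Real.exp_pos _).le (pow_nonneg hK (n+1))
    have hxb : |x| ≤ |x₀| + 1 := by
      have := abs_sub_abs_le_abs_sub x x₀
      have h2 : |x - x₀| < 1 := by simpa [Real.dist_eq] using Metric.mem_ball.1 hx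
      linarith
    calc x * W ω ≤ |x * W ω| := le_abs_self _
      _ = |x| * |W ω| := abs_mul _ _
      _ ≤ (|x₀| + 1) * K := by
          refine mul_le_mul hxb hω (abs_nonneg _) (by positivity)
  · filter_upwards with ω
    intro x _
    have h1 : HasDerivAt (fun y : ℝ => Real.exp (y * W ω))
        (Real.exp (x * W ω) * W ω) x := (hasDerivAt_mul_const (W ω)).exp
    have h2 := h1.const_mul ((W ω)^n)
    exact h2.congr_deriv (by ring)

lemma momint_pos {K : ℝ} {W : Ω → ℝ} (hm : Measurable W) (hK : 0 ≤ K)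
    (hb : ∀ᵐ ω ∂(ℙ : Measure Ω), |W ω| ≤ K) (t : ℝ) :
    0 < ∫ ω, Real.exp (t * W ω) := by
  have hint : Integrable (fun ω => Real.exp (t * W ω)) (ℙ : Measure Ω) := by
    simpa using integrable_pow_mul_exp hK hm hb 0 t
  have hlow : (fun _ : Ω => Real.exp (-(|t| * K))) ≤ᵐ[(ℙ : Measure Ω)]
      fun ω => Real.exp (t * W ω) := by
    filter_upwards [hb] with ω hω
    refine Real.exp_le_exp.2 ?_
    have : |t * W ω| ≤ |t| * K := by
      rw [abs_mul]; exact mul_le_mul_of_nonneg_left hω (abs_nonneg t)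
    linarith [neg_abs_le (t * W ω)]
  calc (0:ℝ) < Real.exp (-(|t| * K)) := Real.exp_pos _
    _ = ∫ _ω, Real.exp (-(|t| * K)) ∂(ℙ : Measure Ω) := by simp
    _ ≤ ∫ ω, Real.exp (t * W ω) := integral_mono_ae (integrable_const _) hint hlow

end moments

/-- Let `U` be supported on `[−K,a) ∪ (b,K]` and `V` on `[a,b]`. Then
`ψ(x) = log E[e^{xU}] − log E[e^{xV}]` has a derivative with at most one root, and at
any critical point the second derivative is strictly positive (so `ψ` is either
monotone or has a unique critical point which is a strict local minimum). -/
theorem stmt_16 {Ω : Type*} [MeasureSpace Ω] [IsProbabilityMeasure (ℙ : Measure Ω)]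
    (K a b : ℝ) (hKa : -K ≤ a) (hab : a < b) (hbK : b ≤ K)
    (U V : Ω → ℝ) (hUmeas : Measurable U) (hVmeas : Measurable V)
    (hU : ∀ᵐ ω ∂(ℙ : Measure Ω),
      U ω ∈ Set.Icc (-K) K ∧ (U ω < a ∨ b < U ω))
    (hV : ∀ᵐ ω ∂(ℙ : Measure Ω), V ω ∈ Set.Icc a b) :
    {x : ℝ | deriv (fun t : ℝ =>
        Real.log (∫ ω, Real.exp (t * U ω)) - Real.log (∫ ω, Real.exp (t * V ω))) x
          = 0}.Subsingleton ∧
    (∀ x : ℝ, deriv (fun t : ℝ =>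
        Real.log (∫ ω, Real.exp (t * U ω)) - Real.log (∫ ω, Real.exp (t * V ω))) x = 0 →
      0 < deriv (deriv (fun t : ℝ =>
        Real.log (∫ ω, Real.exp (t * U ω)) - Real.log (∫ ω, Real.exp (t * V ω)))) x) := by
  have hK : (0:ℝ) ≤ K := by linarith
  have hbU : ∀ᵐ ω ∂(ℙ : Measure Ω), |U ω| ≤ K :=
    hU.mono fun ω h => abs_le.2 ⟨h.1.1, h.1.2⟩
  have hbV : ∀ᵐ ω ∂(ℙ : Measure Ω), |V ω| ≤ K :=
    hV.mono fun ω h => abs_le.2 ⟨by linarith [h.1], by linarith [h.2]⟩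
  -- derivatives of the moment integrals
  have hDMU : ∀ x : ℝ, HasDerivAt (fun t => ∫ ω, Real.exp (t * U ω))
      (∫ ω, U ω * Real.exp (x * U ω)) x := fun x => by
    simpa using hasDerivAt_momint hK hUmeas hbU 0 x
  have hDMV : ∀ x : ℝ, HasDerivAt (fun t => ∫ ω, Real.exp (t * V ω))
      (∫ ω, V ω * Real.exp (x * V ω)) x := fun x => by
    simpa using hasDerivAt_momint hK hVmeas hbV 0 x
  have hDM1U : ∀ x : ℝ, HasDerivAt (fun t => ∫ ω, U ω * Real.exp (t * U ω))
      (∫ ω, (U ω)^2 * Real.exp (x * U ω)) x := fun x => by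
    simpa using hasDerivAt_momint hK hUmeas hbU 1 x
  have hDM1V : ∀ x : ℝ, HasDerivAt (fun t => ∫ ω, V ω * Real.exp (t * V ω))
      (∫ ω, (V ω)^2 * Real.exp (x * V ω)) x := fun x => by
    simpa using hasDerivAt_momint hK hVmeas hbV 1 x
  have hMUpos : ∀ x : ℝ, 0 < ∫ ω, Real.exp (x * U ω) := momint_pos hUmeas hK hbU
  have hMVpos : ∀ x : ℝ, 0 < ∫ ω, Real.exp (x * V ω) := momint_pos hVmeas hK hbV
  -- first derivative of ψ
  have main : ∀ x : ℝ, HasDerivAt (fun t : ℝ =>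
      Real.log (∫ ω, Real.exp (t * U ω)) - Real.log (∫ ω, Real.exp (t * V ω)))
      ((∫ ω, U ω * Real.exp (x * U ω)) / (∫ ω, Real.exp (x * U ω))
        - (∫ ω, V ω * Real.exp (x * V ω)) / (∫ ω, Real.exp (x * V ω))) x := fun x =>
    ((hDMU x).log (hMUpos x).ne').sub ((hDMV x).log (hMVpos x).ne')
  have hderiv : deriv (fun t : ℝ =>
      Real.log (∫ ω, Real.exp (t * U ω)) - Real.log (∫ ω, Real.exp (t * V ω)))
      = fun x => (∫ ω, U ω * Real.exp (x * U ω)) / (∫ ω, Real.exp (x * U ω))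
        - (∫ ω, V ω * Real.exp (x * V ω)) / (∫ ω, Real.exp (x * V ω)) :=
    funext fun x => (main x).deriv
  -- second derivative
  have main2 : ∀ x : ℝ, HasDerivAt (fun x : ℝ =>
      (∫ ω, U ω * Real.exp (x * U ω)) / (∫ ω, Real.exp (x * U ω))
        - (∫ ω, V ω * Real.exp (x * V ω)) / (∫ ω, Real.exp (x * V ω)))
      (((∫ ω, (U ω)^2 * Real.exp (x * U ω)) * (∫ ω, Real.exp (x * U ω))
          - (∫ ω, U ω * Real.exp (x * U ω)) * (∫ ω, U ω * Real.exp (x * U ω)))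
          / (∫ ω, Real.exp (x * U ω))^2
        - ((∫ ω, (V ω)^2 * Real.exp (x * V ω)) * (∫ ω, Real.exp (x * V ω))
          - (∫ ω, V ω * Real.exp (x * V ω)) * (∫ ω, V ω * Real.exp (x * V ω)))
          / (∫ ω, Real.exp (x * V ω))^2) x := fun x =>
    ((hDM1U x).div (hDMU x) (hMUpos x).ne').sub ((hDM1V x).div (hDMV x) (hMVpos x).ne')
  -- key positivity at a critical point
  have hkey : ∀ x : ℝ,
      (∫ ω, U ω * Real.exp (x * U ω)) / (∫ ω, Real.exp (x * U ω))
        - (∫ ω, V ω * Real.exp (x * V ω)) / (∫ ω, Real.exp (x * V ω)) = 0 →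
      0 < ((∫ ω, (U ω)^2 * Real.exp (x * U ω)) * (∫ ω, Real.exp (x * U ω))
          - (∫ ω, U ω * Real.exp (x * U ω)) * (∫ ω, U ω * Real.exp (x * U ω)))
          / (∫ ω, Real.exp (x * U ω))^2
        - ((∫ ω, (V ω)^2 * Real.exp (x * V ω)) * (∫ ω, Real.exp (x * V ω))
          - (∫ ω, V ω * Real.exp (x * V ω)) * (∫ ω, V ω * Real.exp (x * V ω)))
          / (∫ ω, Real.exp (x * V ω))^2 := by
    intro x hx
    have hIU0 : Integrable (fun ω => Real.exp (x * U ω)) (ℙ : Measure Ω) := by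
      simpa using integrable_pow_mul_exp hK hUmeas hbU 0 x
    have hIU1 : Integrable (fun ω => U ω * Real.exp (x * U ω)) (ℙ : Measure Ω) := by
      simpa using integrable_pow_mul_exp hK hUmeas hbU 1 x
    have hIU2 : Integrable (fun ω => (U ω)^2 * Real.exp (x * U ω)) (ℙ : Measure Ω) := by
      simpa using integrable_pow_mul_exp hK hUmeas hbU 2 x
    have hIV0 : Integrable (fun ω => Real.exp (x * V ω)) (ℙ : Measure Ω) := by
      simpa using integrable_pow_mul_exp hK hVmeas hbV 0 x
    have hIV1 : Integrable (fun ω => V ω * Real.exp (x * V ω)) (ℙ : Measure Ω) := by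
      simpa using integrable_pow_mul_exp hK hVmeas hbV 1 x
    have hIV2 : Integrable (fun ω => (V ω)^2 * Real.exp (x * V ω)) (ℙ : Measure Ω) := by
      simpa using integrable_pow_mul_exp hK hVmeas hbV 2 x
    -- expansion of the quadratic moments
    have hexpU : ∫ ω, (U ω - a) * (U ω - b) * Real.exp (x * U ω)
        = (∫ ω, (U ω)^2 * Real.exp (x * U ω))
          - (a+b) * (∫ ω, U ω * Real.exp (x * U ω))
          + (a*b) * (∫ ω, Real.exp (x * U ω)) := by
      rw [show (fun ω => (U ω - a) * (U ω - b) * Real.exp (x * U ω))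
          = fun ω => ((U ω)^2 * Real.exp (x * U ω)
            - (a+b) * (U ω * Real.exp (x * U ω))) + (a*b) * Real.exp (x * U ω) from
        funext fun ω => by ring]
      have hs : Integrable (fun ω => (U ω)^2 * Real.exp (x * U ω)
          - (a+b) * (U ω * Real.exp (x * U ω))) (ℙ : Measure Ω) := hIU2.sub (hIU1.const_mul _)
      rw [integral_add hs (hIU0.const_mul _),
        integral_sub hIU2 (hIU1.const_mul _), integral_const_mul, integral_const_mul]
    have hexpV : ∫ ω, (V ω - a) * (V ω - b) * Real.exp (x * V ω)
        = (∫ ω, (V ω)^2 * Real.exp (x * V ω))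
          - (a+b) * (∫ ω, V ω * Real.exp (x * V ω))
          + (a*b) * (∫ ω, Real.exp (x * V ω)) := by
      rw [show (fun ω => (V ω - a) * (V ω - b) * Real.exp (x * V ω))
          = fun ω => ((V ω)^2 * Real.exp (x * V ω)
            - (a+b) * (V ω * Real.exp (x * V ω))) + (a*b) * Real.exp (x * V ω) from
        funext fun ω => by ring]
      have hs : Integrable (fun ω => (V ω)^2 * Real.exp (x * V ω)
          - (a+b) * (V ω * Real.exp (x * V ω))) (ℙ : Measure Ω) := hIV2.sub (hIV1.const_mul _)
      rw [integral_add hs (hIV0.const_mul _),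
        integral_sub hIV2 (hIV1.const_mul _), integral_const_mul, integral_const_mul]
    -- sign of the quadratic moments
    have hQUpos : 0 < ∫ ω, (U ω - a) * (U ω - b) * Real.exp (x * U ω) := by
      have hfm : Integrable (fun ω => (U ω - a) * (U ω - b) * Real.exp (x * U ω))
          (ℙ : Measure Ω) := by
        rw [show (fun ω => (U ω - a) * (U ω - b) * Real.exp (x * U ω))
            = fun ω => ((U ω)^2 * Real.exp (x * U ω)
              - (a+b) * (U ω * Real.exp (x * U ω))) + (a*b) * Real.exp (x * U ω) from
          funext fun ω => by ring]
        exact (hIU2.sub (hIU1.const_mul _)).add (hIU0.const_mul _)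
      have hfpos : ∀ᵐ ω ∂(ℙ : Measure Ω),
          0 < (U ω - a) * (U ω - b) * Real.exp (x * U ω) := by
        filter_upwards [hU] with ω hω
        rcases hω.2 with h | h
        · exact mul_pos (mul_pos_of_neg_of_neg (by linarith) (by linarith)) (Real.exp_pos _)
        · exact mul_pos (mul_pos (by linarith) (by linarith)) (Real.exp_pos _)
      have hfnn : 0 ≤ᵐ[(ℙ : Measure Ω)]
          fun ω => (U ω - a) * (U ω - b) * Real.exp (x * U ω) :=
        hfpos.mono fun ω h => h.le
      rcases (integral_nonneg_of_ae hfnn).lt_or_eq with h | h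
      · exact h
      · exfalso
        have h0 : (fun ω => (U ω - a) * (U ω - b) * Real.exp (x * U ω))
            =ᵐ[(ℙ : Measure Ω)] 0 :=
          (integral_eq_zero_iff_of_nonneg_ae hfnn hfm).1 h.symm
        haveI : (ae (ℙ : Measure Ω)).NeBot := ae_neBot.2 (IsProbabilityMeasure.ne_zero _)
        obtain ⟨ω, h1, h2⟩ := (hfpos.and h0).exists
        exact h1.ne' (by simpa using h2)
    have hQVnp : ∫ ω, (V ω - a) * (V ω - b) * Real.exp (x * V ω) ≤ 0 := by
      refine integral_nonpos_of_ae ?_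
      filter_upwards [hV] with ω hω
      have h1 : 0 ≤ V ω - a := by linarith [hω.1]
      have h2 : 0 ≤ b - V ω := by linarith [hω.2]
      have h3 : (V ω - a) * (V ω - b) ≤ 0 := by nlinarith [mul_nonneg h1 h2]
      exact mul_nonpos_of_nonpos_of_nonneg h3 (Real.exp_pos _).le
    -- abbreviations
    set AU := ∫ ω, Real.exp (x * U ω) with hAUdef
    set BU := ∫ ω, U ω * Real.exp (x * U ω) with hBUdef
    set CU := ∫ ω, (U ω)^2 * Real.exp (x * U ω) with hCUdef
    set QU := ∫ ω, (U ω - a) * (U ω - b) * Real.exp (x * U ω) with hQUdef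
    set AV := ∫ ω, Real.exp (x * V ω) with hAVdef
    set BV := ∫ ω, V ω * Real.exp (x * V ω) with hBVdef
    set CV := ∫ ω, (V ω)^2 * Real.exp (x * V ω) with hCVdef
    set QV := ∫ ω, (V ω - a) * (V ω - b) * Real.exp (x * V ω) with hQVdef
    have hAU : 0 < AU := hMUpos x
    have hAV : 0 < AV := hMVpos x
    set m := BU / AU with hmdef
    have hmU : BU = m * AU := (div_mul_cancel₀ _ hAU.ne').symm
    have hmV : BV = m * AV := by
      have h5 : BV / AV = m := by rw [hmdef]; linarith [hx]
      rw [← h5, div_mul_cancel₀ _ hAV.ne']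
    have hCU : CU = QU + (a+b) * BU - a*b * AU := by linarith [hexpU]
    have hCV : CV = QV + (a+b) * BV - a*b * AV := by linarith [hexpV]
    have goal_eq : (CU * AU - BU * BU) / AU^2 - (CV * AV - BV * BV) / AV^2
        = QU / AU - QV / AV := by
      rw [hCU, hCV, hmU, hmV]
      field_simp
      ring
    rw [goal_eq]
    have h6 : 0 < QU / AU := div_pos hQUpos hAU
    have h7 : QV / AV ≤ 0 := div_nonpos_of_nonpos_of_nonneg hQVnp hAV.le
    linarith
  constructor
  · rw [hderiv]
    refine subsingleton_zeros_aux ?_ ?_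
    · exact continuous_iff_continuousAt.2 fun x => (main2 x).continuousAt
    · exact fun x hx => ⟨_, hkey x hx, main2 x⟩
  · intro x hx
    rw [hderiv] at hx ⊢
    rw [(main2 x).deriv]
    exact hkey x hx
end
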